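/- arXiv:2207.04666 — 2 statements merged into one kernel-verified Lean document; each statement's English description precedes it below -/
import Mathlib

section
/- Let P be a digital (t,m,s)-net in base 2 with generating matrices C_1,…,C_s. Then every gain coefficient Γ_{u,k} is either 0 or equal to 2^{m−rank(C_{u,k})}; in particular every nonzero gain coefficient is a power of 2. -/
open Finset

noncomputable section

/-- the `i`-th `b`-adic digit of a natural number `k`. -/
def ndigit (b k i : ℕ) : ℕ := k / b ^ i % b

/-- the `(i+1)`-st `b`-adic digit of a real number `x ∈ [0,1)`
(the unique expansion with infinitely many digits `≠ b-1`). -/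
def rdigit (b : ℕ) (x : ℝ) (i : ℕ) : ℕ := (⌊(b : ℝ) ^ (i + 1) * x⌋).toNat % b

/-- the primitive `b`-th root of unity `ω_b = exp(2πi/b)`. -/
def omg (b : ℕ) : ℂ := Complex.exp (2 * Real.pi * Complex.I / b)

/-- embed a digit (element of `Z_b`) into the finite field `F` via the bijection `φ`. -/
def toF {F : Type} [Field F] [Fintype F] (φ : Fin (Fintype.card F) ≃ F) (a : ℕ) : F :=
  φ ⟨a % Fintype.card F, Nat.mod_lt a Fintype.card_pos⟩

/-- map a field element back to a digit in `Z_b` via `φ⁻¹`. -/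
def fromF {F : Type} [Field F] [Fintype F] (φ : Fin (Fintype.card F) ≃ F) (a : F) : ℕ :=
  (φ.symm a : ℕ)

/-- the `k`-th `b`-adic Walsh function, `b = |F|`,
`wal_k(x) = ω_b^{φ⁻¹(φ(κ₀)φ(ξ₁)) + φ⁻¹(φ(κ₁)φ(ξ₂)) + ⋯}`. -/
def wal {F : Type} [Field F] [Fintype F] (φ : Fin (Fintype.card F) ≃ F) (k : ℕ) (x : ℝ) : ℂ :=
  omg (Fintype.card F) ^
    ∑ i ∈ Finset.range k,
      fromF φ (toF φ (ndigit (Fintype.card F) k i) * toF φ (rdigit (Fintype.card F) x i))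

/-- the multivariate `b`-adic Walsh function `wal_k(x) = ∏_j wal_{k_j}(x_j)`. -/
def walv {F : Type} [Field F] [Fintype F] {s : ℕ} (φ : Fin (Fintype.card F) ≃ F)
    (k : Fin s → ℕ) (x : Fin s → ℝ) : ℂ :=
  ∏ j, wal φ (k j) (x j)

/-- the `j`-th coordinate of the `h`-th point of the digital net with generating
matrices `C_1,…,C_s` (with `n` rows, `m` columns, rows of index `≥ n` unused). -/
def dnet {F : Type} [Field F] [Fintype F] {s m : ℕ} (φ : Fin (Fintype.card F) ≃ F)
    (C : Fin s → ℕ → Fin m → F) (n : ℕ) (h : ℕ) (j : Fin s) : ℝ :=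
  ∑ i ∈ Finset.range n,
    (fromF φ (∑ c, C j i c * toF φ (ndigit (Fintype.card F) h (c : ℕ))) : ℝ) /
      (Fintype.card F : ℝ) ^ (i + 1)

/-- membership in the dual net `P^⊥`:
`C_1^⊤ ν_n(k_1) + ⋯ + C_s^⊤ ν_n(k_s) = 0 ∈ F^m`. -/
def inDual {F : Type} [Field F] [Fintype F] {s m : ℕ} (φ : Fin (Fintype.card F) ≃ F)
    (C : Fin s → ℕ → Fin m → F) (n : ℕ) (k : Fin s → ℕ) : Prop :=
  ∀ c : Fin m,
    ∑ j, ∑ i ∈ Finset.range n, C j i c * toF φ (ndigit (Fintype.card F) (k j) i) = 0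

/-- `V(u,k) = {ℓ ∈ ℕ₀^s : ℓ_j < b^{k_j} if j ∈ u, ℓ_j = 0 otherwise}`. -/
def Vset (b : ℕ) {s : ℕ} (u : Finset (Fin s)) (k : Fin s → ℕ) : Finset (Fin s → ℕ) :=
  Fintype.piFinset fun j => Finset.range (if j ∈ u then b ^ k j else 1)

/-- `A(u,l) = {ℓ ∈ ℕ₀^s : b^{l_j-1} ≤ ℓ_j < b^{l_j} if j ∈ u, ℓ_j = 0 otherwise}`. -/
def Aset (b : ℕ) {s : ℕ} (u : Finset (Fin s)) (l : Fin s → ℕ) : Finset (Fin s → ℕ) :=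
  (Vset b u l).filter fun ℓ => ∀ j ∈ u, b ^ (l j - 1) ≤ ℓ j

/-- `k + 1_v`: add one to the components in `v`. -/
def plusOne {s : ℕ} (k : Fin s → ℕ) (v : Finset (Fin s)) : Fin s → ℕ :=
  fun j => if j ∈ v then k j + 1 else k j

/-- the gain coefficient `Γ_{u,k}` of an `N`-element point set in base `b`. -/
def gain {s : ℕ} (b N : ℕ) (x : Fin N → Fin s → ℝ) (u : Finset (Fin s))
    (k : Fin s → ℕ) : ℝ :=
  (1 / N) * ∑ i, ∑ i', ∏ j ∈ u,
    ((b * (if ⌊(b : ℝ) ^ (k j + 1) * x i j⌋ = ⌊(b : ℝ) ^ (k j + 1) * x i' j⌋ then (1:ℝ) else 0) -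
        (if ⌊(b : ℝ) ^ (k j) * x i j⌋ = ⌊(b : ℝ) ^ (k j) * x i' j⌋ then (1:ℝ) else 0)) /
      (b - 1))

/-- `C_{u,k}`: the matrix stacking the first `k_j` rows of `C_j` for `j ∈ u`
(a generating matrix `C_j` having `n` rows). -/
def Cuk {F : Type} [Field F] [Fintype F] {s m : ℕ} (C : Fin s → ℕ → Fin m → F) (n : ℕ)
    (u : Finset (Fin s)) (k : Fin s → ℕ) :
    Matrix ((j : Fin s) × Fin (min (if j ∈ u then k j else 0) n)) (Fin m) F :=
  fun p c => C p.1 (p.2 : ℕ) c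

/-- `C` generates a digital `(t,m,s)`-net in base `b = |F|`:
`C_{u,k}` has full row rank whenever `|k| ≤ m - t`. -/
def IsDigitalTNet {F : Type} [Field F] [Fintype F] {s m : ℕ}
    (C : Fin s → ℕ → Fin m → F) (n : ℕ) (t : ℕ) : Prop :=
  ∀ u : Finset (Fin s), ∀ k : Fin s → ℕ,
    (∑ j ∈ u, k j) + t ≤ m → (Cuk C n u k).rank = ∑ j ∈ u, k j

/-- the upper bound `B(u,k) = b^{m - rank(C_{u,k})} (b-1)^{rank(C_{u,k}) - rank(C_{u,k+1_u})}`. -/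
def Bcoef {F : Type} [Field F] [Fintype F] {s m : ℕ} (C : Fin s → ℕ → Fin m → F) (n : ℕ)
    (u : Finset (Fin s)) (k : Fin s → ℕ) : ℝ :=
  (Fintype.card F : ℝ) ^ ((m : ℤ) - ((Cuk C n u k).rank : ℤ)) *
    ((Fintype.card F : ℝ) - 1) ^
      (((Cuk C n u k).rank : ℤ) - ((Cuk C n u (plusOne k u)).rank : ℤ))

/-- `t*_u = m + 1 - min{|k| : k ∈ ℕ^{|u|}, C_{u,k} not full row rank}`. -/
def tstar {F : Type} [Field F] [Fintype F] {s m : ℕ} (C : Fin s → ℕ → Fin m → F) (n : ℕ)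
    (u : Finset (Fin s)) : ℤ :=
  (m : ℤ) + 1 -
    (sInf {r : ℕ | ∃ k : Fin s → ℕ, (∀ j ∈ u, 1 ≤ k j) ∧
      (Cuk C n u k).rank ≠ ∑ j ∈ u, k j ∧ r = ∑ j ∈ u, k j} : ℕ)

end
lemma digit_inj (K : ℕ) (d d' : ℕ → ℕ) (hd : ∀ i, d i ≤ 1) (hd' : ∀ i, d' i ≤ 1)
    (h : ∑ i ∈ range K, d i * 2 ^ (K - 1 - i) = ∑ i ∈ range K, d' i * 2 ^ (K - 1 - i)) :
    ∀ i < K, d i = d' i := by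
  induction K with
  | zero => omega
  | succ K ih =>
    have e : ∀ (e : ℕ → ℕ), ∑ i ∈ range (K+1), e i * 2 ^ (K + 1 - 1 - i)
        = 2 * (∑ i ∈ range K, e i * 2 ^ (K - 1 - i)) + e K := by
      intro e
      rw [Finset.sum_range_succ, Finset.mul_sum]
      congr 1
      · apply Finset.sum_congr rfl
        intro i hi
        simp only [Finset.mem_range] at hi
        have : K + 1 - 1 - i = (K - 1 - i) + 1 := by omega
        rw [this, pow_succ]; ring
      · simp
    rw [e d, e d'] at h
    have hdK := hd K; have hdK' := hd' K
    have hK : d K = d' K := by omega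
    have h2 : ∑ i ∈ range K, d i * 2 ^ (K - 1 - i) = ∑ i ∈ range K, d' i * 2 ^ (K - 1 - i) := by
      omega
    intro i hi
    rcases Nat.lt_succ_iff_lt_or_eq.mp hi with h' | h'
    · exact ih h2 i h'
    · rw [h']; exact hK

lemma geom_ico (K n : ℕ) (h : K ≤ n) : ∑ i ∈ Finset.Ico K n, 2 ^ (n - 1 - i) = 2 ^ (n - K) - 1 := by
  induction n with
  | zero => simp [Nat.le_zero.mp h]
  | succ n ih =>
    rcases Nat.eq_or_lt_of_le h with h' | h'
    · simp [h']
    · have hK : K ≤ n := by omega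
      rw [Finset.sum_Ico_succ_top hK]
      have hstep : ∑ i ∈ Finset.Ico K n, 2 ^ (n + 1 - 1 - i) = 2 * (2 ^ (n - K) - 1) := by
        rw [← ih hK, Finset.mul_sum]
        apply Finset.sum_congr rfl
        intro i hi
        simp only [Finset.mem_Ico] at hi
        have : n + 1 - 1 - i = (n - 1 - i) + 1 := by omega
        rw [this, pow_succ]; ring
      rw [hstep]
      have h1 : 2 ^ (n - K) ≥ 1 := Nat.one_le_two_pow
      have h0 : n + 1 - 1 - n = 0 := by omega
      have hp : n + 1 - K = (n - K) + 1 := by omega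
      rw [h0, hp, pow_succ, pow_zero]
      omega

lemma quot_formula (n K : ℕ) (hK : K ≤ n) (d : ℕ → ℕ) (hd : ∀ i, d i ≤ 1) :
    (∑ i ∈ range n, d i * 2 ^ (n - 1 - i)) / 2 ^ (n - K)
      = ∑ i ∈ range K, d i * 2 ^ (K - 1 - i) := by
  have hsplit : ∑ i ∈ range n, d i * 2 ^ (n - 1 - i)
      = 2 ^ (n - K) * (∑ i ∈ range K, d i * 2 ^ (K - 1 - i))
        + ∑ i ∈ Finset.Ico K n, d i * 2 ^ (n - 1 - i) := by
    rw [← Finset.sum_range_add_sum_Ico _ hK]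
    congr 1
    rw [Finset.mul_sum]
    apply Finset.sum_congr rfl
    intro i hi
    simp only [Finset.mem_range] at hi
    have : n - 1 - i = (n - K) + (K - 1 - i) := by omega
    rw [this, pow_add]; ring
  have htail : ∑ i ∈ Finset.Ico K n, d i * 2 ^ (n - 1 - i) < 2 ^ (n - K) := by
    calc ∑ i ∈ Finset.Ico K n, d i * 2 ^ (n - 1 - i)
        ≤ ∑ i ∈ Finset.Ico K n, 2 ^ (n - 1 - i) := by
          apply Finset.sum_le_sum; intro i _
          calc d i * 2 ^ (n-1-i) ≤ 1 * 2 ^ (n-1-i) := Nat.mul_le_mul_right _ (hd i)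
            _ = 2 ^ (n-1-i) := one_mul _
      _ = 2 ^ (n - K) - 1 := geom_ico K n hK
      _ < 2 ^ (n - K) := by have : 2 ^ (n-K) ≥ 1 := Nat.one_le_two_pow; omega
  rw [hsplit, Nat.mul_add_div (by positivity), Nat.div_eq_of_lt htail]
  omega

lemma floor_div_pow (a t : ℕ) : ⌊(a : ℝ) / 2 ^ t⌋ = (a / 2 ^ t : ℕ) := by
  have h1 : (0:ℝ) < 2 ^ t := by positivity
  have hmod := Nat.mod_lt a (show 0 < 2^t by positivity)
  have hdm := Nat.div_add_mod a (2^t)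
  have hc : (2:ℝ) ^ t * (↑(a / 2 ^ t)) + ↑(a % 2 ^ t) = (a:ℝ) := by
    exact_mod_cast congrArg (Nat.cast : ℕ → ℝ) hdm
  rw [Int.floor_eq_iff]
  have hr0 : ((a % 2^t : ℕ) : ℝ) ≥ 0 := Nat.cast_nonneg _
  have hrlt : ((a % 2^t : ℕ) : ℝ) < 2 ^ t := by exact_mod_cast hmod
  constructor
  · rw [Int.cast_natCast, le_div_iff₀ h1]
    linarith
  · rw [Int.cast_natCast, div_lt_iff₀ h1]
    linarith

lemma floor_formula (n r : ℕ) (d : ℕ → ℕ) (hd : ∀ i, d i ≤ 1) :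
    ⌊(2:ℝ) ^ r * ∑ i ∈ range n, (d i : ℝ) / 2 ^ (i+1)⌋
      = ((((∑ i ∈ range n, d i * 2 ^ (n - 1 - i)) / 2 ^ (n - min r n)) * 2 ^ (r - n) : ℕ) : ℤ) := by
  set A : ℕ := ∑ i ∈ range n, d i * 2 ^ (n - 1 - i) with hA
  have hX : ∑ i ∈ range n, (d i : ℝ) / 2 ^ (i+1) = (A : ℝ) / 2 ^ n := by
    rw [hA]
    push_cast
    rw [Finset.sum_div]
    apply Finset.sum_congr rfl
    intro i hi
    simp only [Finset.mem_range] at hi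
    have h2 : (2:ℝ) ^ n = 2 ^ (i+1) * 2 ^ (n-1-i) := by
      rw [← pow_add]; congr 1; omega
    rw [h2]
    have : (2:ℝ) ^ (i+1) ≠ 0 := by positivity
    have : (2:ℝ) ^ (n-1-i) ≠ 0 := by positivity
    field_simp
  rw [hX]
  rcases lt_or_ge r n with h | h
  · have hmin : min r n = r := by omega
    have hrn : r - n = 0 := by omega
    have h2 : (2:ℝ) ^ n = 2 ^ r * 2 ^ (n - r) := by rw [← pow_add]; congr 1; omega
    have he : (2:ℝ) ^ r * ((A:ℝ) / 2 ^ n) = (A:ℝ) / 2 ^ (n - r) := by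
      rw [h2]
      have : (2:ℝ) ^ r ≠ 0 := by positivity
      have : (2:ℝ) ^ (n-r) ≠ 0 := by positivity
      field_simp
    rw [he, hmin, hrn, floor_div_pow]
    simp
  · have hmin : min r n = n := by omega
    have h2 : (2:ℝ) ^ r = 2 ^ (r - n) * 2 ^ n := by rw [← pow_add]; congr 1; omega
    have he : (2:ℝ) ^ r * ((A:ℝ) / 2 ^ n) = ((A * 2 ^ (r-n) : ℕ) : ℝ) := by
      rw [h2]
      have hn : (2:ℝ) ^ n ≠ 0 := by positivity
      push_cast
      field_simp
    rw [he, Int.floor_natCast, hmin]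
    simp

lemma floor_eq_iff_digits (n r : ℕ) (d d' : ℕ → ℕ) (hd : ∀ i, d i ≤ 1) (hd' : ∀ i, d' i ≤ 1) :
    (⌊(2:ℝ) ^ r * ∑ i ∈ range n, (d i : ℝ) / 2 ^ (i+1)⌋
      = ⌊(2:ℝ) ^ r * ∑ i ∈ range n, (d' i : ℝ) / 2 ^ (i+1)⌋)
    ↔ ∀ i < min r n, d i = d' i := by
  rw [floor_formula n r d hd, floor_formula n r d' hd', Int.natCast_inj]
  rw [Nat.mul_left_inj (by positivity : (2:ℕ) ^ (r-n) ≠ 0)]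
  rw [quot_formula n (min r n) (min_le_right r n) d hd,
    quot_formula n (min r n) (min_le_right r n) d' hd']
  constructor
  · exact fun h => digit_inj _ d d' hd hd' h
  · intro h
    exact Finset.sum_congr rfl fun i hi => by rw [h i (Finset.mem_range.mp hi)]

section MainHelpers

variable {F : Type} [Field F] [Fintype F]

lemma two_elts (h2 : Fintype.card F = 2) : ∀ y : F, y = 0 ∨ y = 1 := by
  classical
  intro y
  have hne : (0:F) ≠ 1 := zero_ne_one
  have hcard : ({0, 1} : Finset F).card = 2 := by
    rw [Finset.card_insert_of_notMem (by simp [hne]), Finset.card_singleton]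
  have huniv : ({0, 1} : Finset F) = Finset.univ := by
    apply Finset.eq_univ_of_card
    rw [hcard, h2]
  have : y ∈ ({0, 1} : Finset F) := huniv ▸ Finset.mem_univ y
  simpa using this

lemma one_add_one (h2 : Fintype.card F = 2) : (1:F) + 1 = 0 := by
  rcases two_elts h2 ((1:F) + 1) with h | h
  · exact h
  · exfalso
    have : (1:F) + 1 = 0 + 1 := by rw [h, zero_add]
    exact one_ne_zero (add_right_cancel this)

lemma add_self (h2 : Fintype.card F = 2) (x : F) : x + x = 0 := by
  rcases two_elts h2 x with h | h <;> simp [h, one_add_one h2]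

lemma eq_iff_add (h2 : Fintype.card F = 2) (a b : F) : a = b ↔ a + b = 0 := by
  constructor
  · rintro rfl; exact add_self h2 a
  · intro h
    have : a + b + b = 0 + b := by rw [h]
    rw [add_assoc, add_self h2 b, add_zero, zero_add] at this
    exact this

lemma fromF_le (h2 : Fintype.card F = 2) (φ : Fin (Fintype.card F) ≃ F) (y : F) :
    fromF φ y ≤ 1 := by
  have := (φ.symm y).isLt
  unfold fromF
  omega

lemma fromF_inj (φ : Fin (Fintype.card F) ≃ F) : Function.Injective (fromF φ) :=
  fun a b h => φ.symm.injective (Fin.val_injective h)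

lemma toF_inj_lt (φ : Fin (Fintype.card F) ≃ F) (a a' : ℕ) (ha : a < Fintype.card F)
    (ha' : a' < Fintype.card F) (h : toF φ a = toF φ a') : a = a' := by
  have h1 : (⟨a % Fintype.card F, Nat.mod_lt a Fintype.card_pos⟩ : Fin (Fintype.card F))
      = ⟨a' % Fintype.card F, Nat.mod_lt a' Fintype.card_pos⟩ := φ.injective h
  have h2 := congrArg Fin.val h1
  simpa [Nat.mod_eq_of_lt ha, Nat.mod_eq_of_lt ha'] using h2

/-- the row functional -/
def rowF {s m : ℕ} (C : Fin s → ℕ → Fin m → F) (j : Fin s) (a : ℕ) (v : Fin m → F) : F :=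
  ∑ c, C j a c * v c

/-- the points as functions of the vector -/
noncomputable def Xp {s m : ℕ} (φ : Fin (Fintype.card F) ≃ F) (C : Fin s → ℕ → Fin m → F)
    (n : ℕ) (v : Fin m → F) (j : Fin s) : ℝ :=
  ∑ a ∈ Finset.range n, (fromF φ (rowF C j a v) : ℝ) / (Fintype.card F : ℝ) ^ (a + 1)

/-- digit vector map -/
def nuF (φ : Fin (Fintype.card F) ≃ F) (m : ℕ) (i : ℕ) : Fin m → F :=
  fun c => toF φ (ndigit (Fintype.card F) i c)

lemma dnet_eq {s m : ℕ} (φ : Fin (Fintype.card F) ≃ F) (C : Fin s → ℕ → Fin m → F)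
    (n : ℕ) (h : ℕ) (j : Fin s) : dnet φ C n h j = Xp φ C n (nuF φ m h) j := rfl

open Classical in
/-- the summand -/
noncomputable def Psi {s m : ℕ} (C : Fin s → ℕ → Fin m → F) (n : ℕ) (u : Finset (Fin s))
    (k : Fin s → ℕ) (w : Fin m → F) : ℝ :=
  ∏ j ∈ u,
    (2 * (if ∀ a, a < min (k j + 1) n → rowF C j a w = 0 then (1:ℝ) else 0)
      - (if ∀ a, a < min (k j) n → rowF C j a w = 0 then (1:ℝ) else 0))

open Classical in
/-- sign character -/
noncomputable def sgn (c : F) : ℝ := if c = 0 then 1 else -1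

lemma sgn_add (h2 : Fintype.card F = 2) (a b : F) : sgn (a + b) = sgn a * sgn b := by
  rcases two_elts h2 a with ha | ha <;> rcases two_elts h2 b with hb | hb <;>
    simp [sgn, ha, hb, one_add_one h2]

lemma sgn_sum (h2 : Fintype.card F = 2) {ι : Type*} (T : Finset ι) (g : ι → F) :
    sgn (∑ j ∈ T, g j) = ∏ j ∈ T, sgn (g j) := by
  classical
  induction T using Finset.induction with
  | empty => simp [sgn]
  | insert _ _ hx ih =>
    rw [Finset.sum_insert hx, Finset.prod_insert hx, sgn_add h2, ih]

lemma rowF_add {s m : ℕ} (C : Fin s → ℕ → Fin m → F) (j : Fin s) (a : ℕ) (v w : Fin m → F) :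
    rowF C j a (v + w) = rowF C j a v + rowF C j a w := by
  unfold rowF
  rw [← Finset.sum_add_distrib]
  apply Finset.sum_congr rfl
  intro c _
  simp [mul_add]

lemma floor_iff {s m : ℕ} (h2 : Fintype.card F = 2) (φ : Fin (Fintype.card F) ≃ F)
    (C : Fin s → ℕ → Fin m → F) (n : ℕ) (v w : Fin m → F) (j : Fin s) (r : ℕ) :
    (⌊(2:ℝ) ^ r * Xp φ C n v j⌋ = ⌊(2:ℝ) ^ r * Xp φ C n w j⌋)
      ↔ ∀ a, a < min r n → rowF C j a (v + w) = 0 := by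
  have hb : ((Fintype.card F : ℕ) : ℝ) = 2 := by rw [h2]; norm_num
  unfold Xp
  rw [hb]
  rw [floor_eq_iff_digits n r _ _ (fun a => fromF_le h2 φ _) (fun a => fromF_le h2 φ _)]
  apply forall_congr'
  intro a
  apply imp_congr Iff.rfl
  constructor
  · intro h
    rw [rowF_add, ← eq_iff_add h2]
    exact fromF_inj φ h
  · intro h
    rw [rowF_add, ← eq_iff_add h2] at h
    rw [h]

lemma nu_bij (h2 : Fintype.card F = 2) (φ : Fin (Fintype.card F) ≃ F) (m : ℕ) :
    Function.Bijective (fun i : Fin (Fintype.card F ^ m) => nuF φ m (i : ℕ)) := by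
  classical
  rw [Fintype.bijective_iff_injective_and_card]
  constructor
  · intro i i' hii
    obtain ⟨iv, hiv⟩ := i
    obtain ⟨iv', hiv'⟩ := i'
    apply Fin.ext
    simp only []
    apply Nat.eq_of_testBit_eq
    intro c
    have hpow : Fintype.card F ^ m = 2 ^ m := by rw [h2]
    have him : iv < 2 ^ m := hpow ▸ hiv
    have him' : iv' < 2 ^ m := hpow ▸ hiv'
    rcases lt_or_ge c m with hc | hc
    · have h := congrFun hii ⟨c, hc⟩
      have hd : ndigit (Fintype.card F) iv c = ndigit (Fintype.card F) iv' c := by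
        apply toF_inj_lt φ _ _ _ _ h
        · exact Nat.mod_lt _ Fintype.card_pos
        · exact Nat.mod_lt _ Fintype.card_pos
      unfold ndigit at hd
      rw [h2] at hd
      rw [Nat.testBit_eq_decide_div_mod_eq, Nat.testBit_eq_decide_div_mod_eq, hd]
    · have h1 : (2:ℕ) ^ m ≤ 2 ^ c := Nat.pow_le_pow_right (by norm_num) hc
      rw [Nat.testBit_lt_two_pow (by omega), Nat.testBit_lt_two_pow (by omega)]
  · simp [Fintype.card_fun]

lemma summand_eq {s m : ℕ} (h2 : Fintype.card F = 2) (φ : Fin (Fintype.card F) ≃ F)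
    (C : Fin s → ℕ → Fin m → F) (n : ℕ) (u : Finset (Fin s)) (k : Fin s → ℕ)
    (v w : Fin m → F) :
    (∏ j ∈ u, ((2:ℝ) *
        (if ⌊(2:ℝ) ^ (k j + 1) * Xp φ C n v j⌋ = ⌊(2:ℝ) ^ (k j + 1) * Xp φ C n w j⌋
          then (1:ℝ) else 0) -
        (if ⌊(2:ℝ) ^ (k j) * Xp φ C n v j⌋ = ⌊(2:ℝ) ^ (k j) * Xp φ C n w j⌋
          then (1:ℝ) else 0)))
      = Psi C n u k (v + w) := by
  classical
  unfold Psi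
  apply Finset.prod_congr rfl
  intro j _
  rw [if_congr (floor_iff h2 φ C n v w j (k j + 1)) rfl rfl,
    if_congr (floor_iff h2 φ C n v w j (k j)) rfl rfl]

lemma ker_iff {s m : ℕ} (C : Fin s → ℕ → Fin m → F) (n : ℕ) (u : Finset (Fin s))
    (k : Fin s → ℕ) (w : Fin m → F) :
    (Cuk C n u k).mulVec w = 0 ↔ ∀ j ∈ u, ∀ a, a < min (k j) n → rowF C j a w = 0 := by
  constructor
  · intro h j hj a ha
    have ha' : a < min (if j ∈ u then k j else 0) n := by rw [if_pos hj]; exact ha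
    have := congrFun h ⟨j, ⟨a, ha'⟩⟩
    simpa [Matrix.mulVec, dotProduct, Cuk, rowF] using this
  · intro h
    funext p
    obtain ⟨j, a⟩ := p
    obtain ⟨av, ha⟩ := a
    by_cases hj : j ∈ u
    · rw [if_pos hj] at ha
      have := h j hj av ha
      simpa [Matrix.mulVec, dotProduct, Cuk, rowF] using this
    · exfalso
      rw [if_neg hj] at ha
      omega

lemma rank_ker {m : ℕ} {α : Type*} [Fintype α] (M : Matrix α (Fin m) F) :
    Nat.card (LinearMap.ker M.mulVecLin) = Fintype.card F ^ (m - M.rank) := by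
  classical
  have h := LinearMap.finrank_range_add_finrank_ker M.mulVecLin
  rw [Module.finrank_pi, Fintype.card_fin] at h
  have hr : M.rank = Module.finrank F (LinearMap.range M.mulVecLin) := rfl
  have hker : Module.finrank F (LinearMap.ker M.mulVecLin) = m - M.rank := by omega
  rw [Nat.card_eq_fintype_card,
    Module.card_fintype (Module.finBasis F (LinearMap.ker M.mulVecLin)),
    Fintype.card_fin, hker]


/-- kernel condition -/
def Kc {s m : ℕ} (C : Fin s → ℕ → Fin m → F) (n : ℕ) (u : Finset (Fin s)) (k : Fin s → ℕ)
    (w : Fin m → F) : Prop :=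
  ∀ j ∈ u, ∀ a, a < min (k j) n → rowF C j a w = 0

/-- the extra row functional -/
def gj {s m : ℕ} (C : Fin s → ℕ → Fin m → F) (n : ℕ) (k : Fin s → ℕ) (j : Fin s)
    (w : Fin m → F) : F :=
  if k j < n then rowF C j (k j) w else 0

/-- sum of extra rows -/
def Rdot {s m : ℕ} (C : Fin s → ℕ → Fin m → F) (n : ℕ) (u : Finset (Fin s)) (k : Fin s → ℕ)
    (w : Fin m → F) : F :=
  ∑ j ∈ u, gj C n k j w

lemma gj_add {s m : ℕ} (C : Fin s → ℕ → Fin m → F) (n : ℕ) (k : Fin s → ℕ) (j : Fin s)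
    (v w : Fin m → F) : gj C n k j (v + w) = gj C n k j v + gj C n k j w := by
  unfold gj
  by_cases h : k j < n
  · rw [if_pos h, if_pos h, if_pos h, rowF_add]
  · rw [if_neg h, if_neg h, if_neg h, add_zero]

lemma Rdot_add {s m : ℕ} (C : Fin s → ℕ → Fin m → F) (n : ℕ) (u : Finset (Fin s))
    (k : Fin s → ℕ) (v w : Fin m → F) :
    Rdot C n u k (v + w) = Rdot C n u k v + Rdot C n u k w := by
  unfold Rdot
  rw [← Finset.sum_add_distrib]
  exact Finset.sum_congr rfl fun j _ => gj_add C n k j v w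

lemma Kc_add {s m : ℕ} (C : Fin s → ℕ → Fin m → F) (n : ℕ) (u : Finset (Fin s))
    (k : Fin s → ℕ) (v w : Fin m → F) (hv : Kc C n u k v) (hw : Kc C n u k w) :
    Kc C n u k (v + w) := by
  intro j hj a ha
  rw [rowF_add, hv j hj a ha, hw j hj a ha, add_zero]

lemma vec_add_self (h2 : Fintype.card F = 2) {m : ℕ} (v : Fin m → F) : v + v = 0 := by
  funext c
  exact add_self h2 (v c)

open Classical in
lemma Psi_eq {s m : ℕ} (h2 : Fintype.card F = 2) (C : Fin s → ℕ → Fin m → F) (n : ℕ)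
    (u : Finset (Fin s)) (k : Fin s → ℕ) (w : Fin m → F) :
    Psi C n u k w = if Kc C n u k w then sgn (Rdot C n u k w) else 0 := by
  by_cases hw : Kc C n u k w
  · rw [if_pos hw]
    unfold Rdot
    rw [sgn_sum h2]
    unfold Psi
    apply Finset.prod_congr rfl
    intro j hj
    have hB : ∀ a, a < min (k j) n → rowF C j a w = 0 := hw j hj
    rw [if_pos hB]
    by_cases hkn : k j < n
    · have hgj : gj C n k j w = rowF C j (k j) w := if_pos hkn
      by_cases hr : rowF C j (k j) w = 0
      · have hA : ∀ a, a < min (k j + 1) n → rowF C j a w = 0 := by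
          intro a ha
          rcases Nat.lt_or_ge a (k j) with h' | h'
          · exact hB a (by omega)
          · have : a = k j := by omega
            rw [this]; exact hr
        rw [if_pos hA, hgj]
        simp [sgn, hr]
        norm_num
      · have hA : ¬ (∀ a, a < min (k j + 1) n → rowF C j a w = 0) := by
          intro hcon; exact hr (hcon (k j) (by omega))
        rw [if_neg hA, hgj]
        simp only [sgn, if_neg hr]
        norm_num
    · have hgj : gj C n k j w = 0 := if_neg hkn
      have hA : ∀ a, a < min (k j + 1) n → rowF C j a w = 0 := by
        intro a ha; exact hB a (by omega)
      rw [if_pos hA, hgj]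
      simp [sgn]
      norm_num
  · rw [if_neg hw]
    unfold Psi
    unfold Kc at hw
    push_neg at hw
    obtain ⟨j, hj, a, ha, hr⟩ := hw
    apply Finset.prod_eq_zero hj
    have hA : ¬ (∀ a', a' < min (k j + 1) n → rowF C j a' w = 0) := by
      intro hcon; exact hr (hcon a (by omega))
    have hB : ¬ (∀ a', a' < min (k j) n → rowF C j a' w = 0) := by
      intro hcon; exact hr (hcon a ha)
    rw [if_neg hA, if_neg hB]
    ring


end MainHelpers

/-- for a digital `(t,m,s)`-net in base `2`, every gain coefficient is
`0` or `2^{m - rank(C_{u,k})}`; in particular every nonzero gain coefficient is a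
power of `2`. -/
theorem stmt14 {F : Type} [Field F] [Fintype F] {s m : ℕ}
    (h2 : Fintype.card F = 2)
    (φ : Fin (Fintype.card F) ≃ F) (hφ : φ ⟨0, Fintype.card_pos⟩ = 0)
    (C : Fin s → ℕ → Fin m → F) (n : ℕ) (hn : m ≤ n)
    (t : ℕ) (ht : t ≤ m) (hnet : IsDigitalTNet C n t)
    (u : Finset (Fin s)) (hu : u.Nonempty) (k : Fin s → ℕ) :
    gain (Fintype.card F) (Fintype.card F ^ m) (fun i j => dnet φ C n (i : ℕ) j) u k = 0 ∨
    gain (Fintype.card F) (Fintype.card F ^ m) (fun i j => dnet φ C n (i : ℕ) j) u k =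
      (2 : ℝ) ^ (m - (Cuk C n u k).rank) := by
  classical
  have hb : ((Fintype.card F : ℕ) : ℝ) = 2 := by rw [h2]; norm_num
  have h21 : (2:ℝ) - 1 = 1 := by norm_num
  have hNne : ((Fintype.card F ^ m : ℕ) : ℝ) ≠ 0 := by
    have h0 : 0 < Fintype.card F := Fintype.card_pos
    exact Nat.cast_ne_zero.mpr (pow_pos h0 m).ne'
  have e0 : ∀ (h : ℕ) (j : Fin s), dnet φ C n h j = Xp φ C n (nuF φ m h) j := fun h j => rfl
  have step1 : gain (Fintype.card F) (Fintype.card F ^ m)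
      (fun i j => dnet φ C n (i : ℕ) j) u k = ∑ w : Fin m → F, Psi C n u k w := by
    simp only [gain, hb, e0, h21, div_one]
    simp only [summand_eq h2 φ C n u k]
    have hinner : ∀ i : Fin (Fintype.card F ^ m),
        ∑ i' : Fin (Fintype.card F ^ m), Psi C n u k (nuF φ m (i:ℕ) + nuF φ m (i':ℕ))
          = ∑ w : Fin m → F, Psi C n u k w := by
      intro i
      rw [Fintype.sum_bijective _ (nu_bij h2 φ m)
        (fun i' : Fin (Fintype.card F ^ m) => Psi C n u k (nuF φ m (i:ℕ) + nuF φ m (i':ℕ)))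
        (fun w => Psi C n u k (nuF φ m (i:ℕ) + w)) (fun i' => rfl)]
      rw [Fintype.sum_bijective _ (Equiv.addLeft (nuF φ m (i:ℕ))).bijective
        (fun w => Psi C n u k (nuF φ m (i:ℕ) + w)) (Psi C n u k) (fun w => rfl)]
    rw [Finset.sum_congr rfl (fun i _ => hinner i)]
    rw [Finset.sum_const, Finset.card_univ, Fintype.card_fin, nsmul_eq_mul]
    rw [one_div, inv_mul_cancel_left₀ hNne]
  rw [step1]
  simp only [Psi_eq h2 C n u k]
  by_cases hall : ∀ w : Fin m → F, Kc C n u k w → Rdot C n u k w = 0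
  · right
    have hone : ∀ w : Fin m → F, (if Kc C n u k w then sgn (Rdot C n u k w) else 0)
        = (if Kc C n u k w then (1:ℝ) else 0) := by
      intro w
      by_cases hw : Kc C n u k w
      · rw [if_pos hw, if_pos hw, hall w hw]
        simp [sgn]
      · rw [if_neg hw, if_neg hw]
    rw [Fintype.sum_congr _ _ hone, Finset.sum_boole]
    have hKiff : ∀ w : Fin m → F, Kc C n u k w ↔ w ∈ LinearMap.ker (Cuk C n u k).mulVecLin := by
      intro w
      rw [LinearMap.mem_ker, Matrix.mulVecLin_apply]
      exact Iff.symm (ker_iff C n u k w)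
    have hcard : (Finset.univ.filter (Kc C n u k)).card
        = Fintype.card F ^ (m - (Cuk C n u k).rank) := by
      rw [← rank_ker (Cuk C n u k), ← Fintype.card_subtype, ← Nat.card_eq_fintype_card]
      exact Nat.card_congr (Equiv.subtypeEquivRight hKiff)
    rw [hcard, h2]
    push_cast
    ring
  · left
    push_neg at hall
    obtain ⟨w₀, hw₀K, hw₀⟩ := hall
    have hshift : ∑ w : Fin m → F, (if Kc C n u k w then sgn (Rdot C n u k w) else 0)
        = ∑ w : Fin m → F, (if Kc C n u k (w₀ + w) then sgn (Rdot C n u k (w₀ + w)) else 0) :=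
      (Fintype.sum_bijective (fun w => w₀ + w) (Equiv.addLeft w₀).bijective
        (fun w => if Kc C n u k (w₀ + w) then sgn (Rdot C n u k (w₀ + w)) else 0)
        (fun w => if Kc C n u k w then sgn (Rdot C n u k w) else 0) (fun w => rfl)).symm
    have hneg : ∀ w : Fin m → F, (if Kc C n u k (w₀ + w) then sgn (Rdot C n u k (w₀ + w)) else 0)
        = - (if Kc C n u k w then sgn (Rdot C n u k w) else 0) := by
      intro w
      by_cases hw : Kc C n u k w
      · rw [if_pos hw, if_pos (Kc_add C n u k w₀ w hw₀K hw)]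
        rw [Rdot_add C n u k, sgn_add h2]
        have hs : sgn (Rdot C n u k w₀) = -1 := if_neg hw₀
        rw [hs]
        ring
      · have h1 : ¬ Kc C n u k (w₀ + w) := by
          intro hcon
          apply hw
          have hKK := Kc_add C n u k w₀ (w₀ + w) hw₀K hcon
          rwa [← add_assoc, vec_add_self h2, zero_add] at hKK
        rw [if_neg hw, if_neg h1, neg_zero]
    have h0 : ∑ w : Fin m → F, (if Kc C n u k w then sgn (Rdot C n u k w) else 0)
        = - ∑ w : Fin m → F, (if Kc C n u k w then sgn (Rdot C n u k w) else 0) := by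
      conv_lhs => rw [hshift, Fintype.sum_congr _ _ hneg]
      exact Finset.sum_neg_distrib _
    linarith
end

section
/- Define B(u,k) = b^{m−rank(C_{u,k})}(b−1)^{rank(C_{u,k})−rank(C_{u,k+1_u})}. Then for any nonempty u ⊆ {1,…,s} and any k, k' ∈ ℕ₀^{|u|} with k ≥ k' componentwise, B(u,k) ≤ B(u,k'). -/
open Finset

lemma cuk_rank_mono {F : Type} [Field F] [Fintype F] {s m : ℕ}
    (C : Fin s → ℕ → Fin m → F) (n : ℕ) (u : Finset (Fin s)) {k k' : Fin s → ℕ}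
    (h : ∀ j, k' j ≤ k j) : (Cuk C n u k').rank ≤ (Cuk C n u k).rank := by
  rw [Matrix.rank_eq_finrank_span_row, Matrix.rank_eq_finrank_span_row]
  apply Submodule.finrank_mono
  apply Submodule.span_mono
  rintro x ⟨⟨j, i⟩, rfl⟩
  refine ⟨⟨j, ⟨(i : ℕ), ?_⟩⟩, rfl⟩
  refine lt_of_lt_of_le i.2 (min_le_min ?_ le_rfl)
  split_ifs
  · exact h j
  · exact le_rfl

lemma bcoef_aux {R : ℝ} {M a a' c c' : ℤ} (hR : (2 : ℝ) ≤ R)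
    (ha : a' ≤ a) (hc : c' ≤ c) :
    R ^ (M - a) * (R - 1) ^ (a - c) ≤ R ^ (M - a') * (R - 1) ^ (a' - c') := by
  have h1 : (0 : ℝ) < R := by linarith
  have h2 : (0 : ℝ) < R - 1 := by linarith
  have key : (R - 1) ^ ((a - c) - (a' - c')) ≤ R ^ (a - a') := by
    calc (R - 1) ^ ((a - c) - (a' - c')) ≤ (R - 1) ^ (a - a') :=
          zpow_le_zpow_right₀ (by linarith) (by omega)
      _ ≤ R ^ (a - a') := by
          obtain ⟨d, hd⟩ : ∃ d : ℕ, a - a' = (d : ℤ) :=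
            ⟨(a - a').toNat, (Int.toNat_of_nonneg (by omega)).symm⟩
          rw [hd, zpow_natCast, zpow_natCast]
          exact pow_le_pow_left₀ (by linarith) (by linarith) d
  have hpos : (0 : ℝ) < R ^ (a - a') := zpow_pos h1 _
  rw [← mul_le_mul_iff_of_pos_right hpos]
  have e1 : R ^ (M - a) * (R - 1) ^ (a - c) * R ^ (a - a')
      = R ^ (M - a') * ((R - 1) ^ (a' - c') * (R - 1) ^ ((a - c) - (a' - c'))) := by
    rw [← zpow_add₀ h2.ne', show (a' - c') + ((a - c) - (a' - c')) = a - c by ring]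
    rw [show (M - a') = (M - a) + (a - a') by ring, zpow_add₀ h1.ne']
    ring
  rw [e1, mul_assoc]
  gcongr

/-- monotonicity of `B(u,k)`: if `k ≥ k'` componentwise then
`B(u,k) ≤ B(u,k')`. -/
theorem stmt15 {F : Type} [Field F] [Fintype F] {s m : ℕ}
    (C : Fin s → ℕ → Fin m → F) (n : ℕ)
    (u : Finset (Fin s)) (hu : u.Nonempty) (k k' : Fin s → ℕ)
    (hkk : ∀ j, k' j ≤ k j) :
    Bcoef C n u k ≤ Bcoef C n u k' := by
  have hcard : (2 : ℕ) ≤ Fintype.card F := Fintype.one_lt_card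
  have hR : (2 : ℝ) ≤ (Fintype.card F : ℝ) := by exact_mod_cast hcard
  have hkk1 : ∀ j, plusOne k' u j ≤ plusOne k u j := by
    intro j; unfold plusOne; split_ifs <;> simp [hkk j]
  have ha : ((Cuk C n u k').rank : ℤ) ≤ ((Cuk C n u k).rank : ℤ) := by
    exact_mod_cast cuk_rank_mono C n u hkk
  have hc : ((Cuk C n u (plusOne k' u)).rank : ℤ) ≤ ((Cuk C n u (plusOne k u)).rank : ℤ) := by
    exact_mod_cast cuk_rank_mono C n u hkk1
  unfold Bcoef
  exact bcoef_aux hR ha hc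
end
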